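/- Let n ≥ 1, let α_0, …, α_{n−2} lie in the open unit disc, let β lie on the unit circle, let Φ_k be the monic polynomials of the Szegő recursion with Verblunsky coefficients α_0, …, α_{n−2}, and let Φ_n(z; β) = zΦ_{n−1}(z) − conj(β)·Φ_{n−1}^*(z) be the paraorthogonal polynomial. Then Φ_n(z; β) = det(z·I_n − C_n(α_0, …, α_{n−2}, β)), the characteristic polynomial of the finite CMV matrix with coefficients α_0, …, α_{n−2}, β. In particular, the zeros of Φ_n(·; β) are exactly the eigenvalues of C_n(α_0, …, α_{n−2}, β). -/

import Mathlib

open Polynomial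

open Polynomial in
/-- The monic OPUC from the Szegő recursion with Verblunsky coefficients `α`:
`Φ_0 = 1`, `Φ_{n+1}(z) = z Φ_n(z) - conj(α_n) Φ_n^*(z)`, where
`Φ_n^*(z) = zⁿ conj(Φ_n(1/conj z))` is the reversed polynomial. -/
noncomputable def szego (α : ℕ → ℂ) : ℕ → Polynomial ℂ
  | 0 => 1
  | n + 1 => X * szego α n -
      Polynomial.C ((starRingEnd ℂ) (α n)) *
        Polynomial.reflect n ((szego α n).map (starRingEnd ℂ))

open Polynomial in
/-- The paraorthogonal polynomial `Φ_{n+1}(z;β) = z Φ_n(z) - conj(β) Φ_n^*(z)`. -/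
noncomputable def popuc (α : ℕ → ℂ) (β : ℂ) (n : ℕ) : Polynomial ℂ :=
  X * szego α n -
    Polynomial.C ((starRingEnd ℂ) β) *
      Polynomial.reflect n ((szego α n).map (starRingEnd ℂ))

noncomputable def tauc (γ : ℂ) : ℂ := (Real.sqrt (1 - ‖γ‖ ^ 2) : ℝ)

/-- Entries of the semi-infinite CMV factor `L = Θ(γ₀) ⊕ Θ(γ₂) ⊕ ⋯`, where
`Θ(γ)` is the 2×2 matrix with rows `(conj γ, τ)`, `(τ, -γ)` and the block `Θ(γ_{2j})`
occupies rows and columns `2j, 2j+1`. -/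
noncomputable def Lent (γ : ℕ → ℂ) (i j : ℕ) : ℂ :=
  if i % 2 = 0 then
    if j = i then (starRingEnd ℂ) (γ i) else if j = i + 1 then tauc (γ i) else 0
  else
    if j = i - 1 then tauc (γ (i - 1)) else if j = i then -γ (i - 1) else 0

/-- Entries of the semi-infinite CMV factor `M = 1 ⊕ Θ(γ₁) ⊕ Θ(γ₃) ⊕ ⋯`, the block
`Θ(γ_{2j+1})` occupying rows and columns `2j+1, 2j+2`. -/
noncomputable def Ment (γ : ℕ → ℂ) (i j : ℕ) : ℂ :=
  if i = 0 then (if j = 0 then 1 else 0)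
  else if i % 2 = 1 then
    if j = i then (starRingEnd ℂ) (γ i) else if j = i + 1 then tauc (γ i) else 0
  else
    if j = i - 1 then tauc (γ (i - 1)) else if j = i then -γ (i - 1) else 0

/-- The `n × n` finite CMV matrix: the product of the upper-left `n × n` blocks of
`L` and `M`; when `|γ_{n-1}| = 1` this is the upper-left `n × n` block of the
semi-infinite product `L·M`. -/
noncomputable def CMVfin (γ : ℕ → ℂ) (n : ℕ) : Matrix (Fin n) (Fin n) ℂ :=
  (Matrix.of fun i j : Fin n => Lent γ i j) * (Matrix.of fun i j : Fin n => Ment γ i j)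

open Matrix

-- ===== auxiliary material =====

lemma conj_conj_ringHom : (starRingEnd ℂ).comp (starRingEnd ℂ) = RingHom.id ℂ :=
  RingHom.ext fun z => Complex.conj_conj z

lemma natDegree_reflect_le {p : Polynomial ℂ} {N : ℕ} (h : p.natDegree ≤ N) :
    (Polynomial.reflect N p).natDegree ≤ N := by
  rw [Polynomial.natDegree_le_iff_coeff_eq_zero]
  intro i hi
  rw [Polynomial.coeff_reflect, Polynomial.revAt_eq_self_of_lt hi]
  exact Polynomial.coeff_eq_zero_of_natDegree_lt (lt_of_le_of_lt h hi)

/-- The reversed polynomial `Φ_k^*`. -/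
noncomputable def phist (γ : ℕ → ℂ) (k : ℕ) : Polynomial ℂ :=
  Polynomial.reflect k ((szego γ k).map (starRingEnd ℂ))

lemma szego_natDegree_le (γ : ℕ → ℂ) (k : ℕ) : (szego γ k).natDegree ≤ k := by
  induction k with
  | zero => simp [szego]
  | succ k ih =>
    rw [szego]
    have h1 : (X * szego γ k).natDegree ≤ k + 1 := by
      refine le_trans Polynomial.natDegree_mul_le ?_
      rw [Polynomial.natDegree_X]; omega
    have h2 : (Polynomial.C ((starRingEnd ℂ) (γ k)) *
        Polynomial.reflect k ((szego γ k).map (starRingEnd ℂ))).natDegree ≤ k + 1 := by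
      refine le_trans Polynomial.natDegree_mul_le ?_
      simpa using le_trans (natDegree_reflect_le (le_trans Polynomial.natDegree_map_le ih)) (by omega)
    exact le_trans (Polynomial.natDegree_sub_le _ _) (max_le h1 h2)

lemma szego_succ (γ : ℕ → ℂ) (k : ℕ) :
    szego γ (k + 1) = X * szego γ k - Polynomial.C ((starRingEnd ℂ) (γ k)) * phist γ k := rfl

lemma phist_succ (γ : ℕ → ℂ) (k : ℕ) :
    phist γ (k + 1) = phist γ k - Polynomial.C (γ k) * (X * szego γ k) := by
  have hdeg : ((szego γ k).map (starRingEnd ℂ)).natDegree ≤ k :=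
    le_trans Polynomial.natDegree_map_le (szego_natDegree_le γ k)
  have hmapmap : ((szego γ k).map (starRingEnd ℂ)).map (starRingEnd ℂ) = szego γ k := by
    rw [Polynomial.map_map, conj_conj_ringHom, Polynomial.map_id]
  rw [phist, szego]
  rw [Polynomial.map_sub, Polynomial.map_mul, Polynomial.map_mul, Polynomial.map_X,
    Polynomial.map_C, ← Polynomial.reflect_map, hmapmap]
  rw [Polynomial.reflect_sub, Polynomial.reflect_C_mul]
  congr 1
  · have : k + 1 = 1 + k := by omega
    rw [this, Polynomial.reflect_mul _ _ Polynomial.natDegree_X_le hdeg]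
    simp [phist]
  · congr 1
    · simp
    · have : k + 1 = 1 + k := by omega
      rw [this, ← one_mul (Polynomial.reflect k (szego γ k)),
        Polynomial.reflect_mul _ _ (by simp) (natDegree_reflect_le (szego_natDegree_le γ k)),
        Polynomial.reflect_one]
      congr 1
      · exact pow_one X
      · ext i; simp [Polynomial.coeff_reflect]

lemma szego_congr {γ γ' : ℕ → ℂ} (k : ℕ) (h : ∀ j < k, γ j = γ' j) :
    szego γ k = szego γ' k := by
  induction k with
  | zero => rfl
  | succ k ih =>
    have hk : szego γ k = szego γ' k := ih fun j hj => h j (by omega)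
    rw [szego, szego, hk, h k (by omega)]

lemma phist_congr {γ γ' : ℕ → ℂ} (k : ℕ) (h : ∀ j < k, γ j = γ' j) :
    phist γ k = phist γ' k := by
  rw [phist, phist, szego_congr k h]

lemma eval_szego_succ (γ : ℕ → ℂ) (k : ℕ) (z : ℂ) :
    (szego γ (k+1)).eval z
      = z * (szego γ k).eval z - (starRingEnd ℂ) (γ k) * (phist γ k).eval z := by
  rw [szego_succ]; simp

lemma eval_phist_succ (γ : ℕ → ℂ) (k : ℕ) (z : ℂ) :
    (phist γ (k+1)).eval z
      = (phist γ k).eval z - γ k * (z * (szego γ k).eval z) := by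
  rw [phist_succ]; simp

lemma szego_zero (γ : ℕ → ℂ) : szego γ 0 = 1 := rfl

lemma phist_zero (γ : ℕ → ℂ) : phist γ 0 = 1 := by
  rw [phist]; simp [szego_zero]

-- tauc lemmas

lemma tauc_conj (x : ℂ) : (starRingEnd ℂ) (tauc x) = tauc x := Complex.conj_ofReal _

lemma tauc_mul_self {x : ℂ} (h : ‖x‖ ≤ 1) :
    tauc x * tauc x = 1 - (starRingEnd ℂ) x * x := by
  have h0 : (0:ℝ) ≤ 1 - ‖x‖ ^ 2 := by
    have := norm_nonneg x
    nlinarith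
  have e1 : tauc x * tauc x = ((1 - ‖x‖ ^ 2 : ℝ) : ℂ) := by
    rw [tauc, ← Complex.ofReal_mul, Real.mul_self_sqrt h0]
  have e2 : (starRingEnd ℂ) x * x = ((‖x‖ ^ 2 : ℝ) : ℂ) := by
    rw [mul_comm, Complex.mul_conj]
    simp [Complex.sq_norm]
  rw [e1, e2]
  push_cast
  ring

lemma conj_mul_self_one {x : ℂ} (h : ‖x‖ = 1) : (starRingEnd ℂ) x * x = 1 := by
  rw [mul_comm, Complex.mul_conj]
  simp [← Complex.sq_norm, h]

-- two point support sums

lemma sum_range_two_supp (F : ℕ → ℂ) (a b n : ℕ) (hab : a ≠ b)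
    (h : ∀ k, k ≠ a → k ≠ b → F k = 0) :
    ∑ k ∈ Finset.range n, F k =
      (if a < n then F a else 0) + (if b < n then F b else 0) := by
  have hFk : ∀ k, F k = (if k = a then F a else 0) + (if k = b then F b else 0) := by
    intro k
    by_cases h1 : k = a
    · subst h1; simp [hab]
    · by_cases h2 : k = b
      · subst h2; simp [h1]
      · simp [h1, h2, h k h1 h2]
  calc ∑ k ∈ Finset.range n, F k
      = ∑ k ∈ Finset.range n, ((if k = a then F a else 0) + (if k = b then F b else 0)) :=
        Finset.sum_congr rfl fun k _ => hFk k
    _ = _ := by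
        rw [Finset.sum_add_distrib, Finset.sum_ite_eq' (Finset.range n) a (fun _ => F a),
          Finset.sum_ite_eq' (Finset.range n) b (fun _ => F b)]
        simp [Finset.mem_range]

-- Lent entry lemmas

lemma Lent_ev_self (γ : ℕ → ℂ) {i : ℕ} (hi : i % 2 = 0) :
    Lent γ i i = (starRingEnd ℂ) (γ i) := by
  rw [Lent, if_pos hi, if_pos rfl]

lemma Lent_ev_succ (γ : ℕ → ℂ) {i : ℕ} (hi : i % 2 = 0) :
    Lent γ i (i + 1) = tauc (γ i) := by
  rw [Lent, if_pos hi, if_neg (by omega), if_pos rfl]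

lemma Lent_ev_zero (γ : ℕ → ℂ) {i j : ℕ} (hi : i % 2 = 0) (h1 : j ≠ i) (h2 : j ≠ i + 1) :
    Lent γ i j = 0 := by
  rw [Lent, if_pos hi, if_neg h1, if_neg h2]

lemma Lent_od_pred (γ : ℕ → ℂ) {i : ℕ} (hi : i % 2 = 1) :
    Lent γ i (i - 1) = tauc (γ (i - 1)) := by
  rw [Lent, if_neg (by omega), if_pos rfl]

lemma Lent_od_self (γ : ℕ → ℂ) {i : ℕ} (hi : i % 2 = 1) :
    Lent γ i i = -γ (i - 1) := by
  rw [Lent, if_neg (by omega), if_neg (by omega), if_pos rfl]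

lemma Lent_od_zero (γ : ℕ → ℂ) {i j : ℕ} (hi : i % 2 = 1) (h1 : j ≠ i - 1) (h2 : j ≠ i) :
    Lent γ i j = 0 := by
  rw [Lent, if_neg (by omega), if_neg h1, if_neg h2]

-- Ment entry lemmas

lemma Ment_zero_zero (γ : ℕ → ℂ) : Ment γ 0 0 = 1 := by
  rw [Ment]; simp

lemma Ment_zero_row (γ : ℕ → ℂ) {j : ℕ} (hj : j ≠ 0) : Ment γ 0 j = 0 := by
  rw [Ment]; simp [hj]

lemma Ment_od_self (γ : ℕ → ℂ) {i : ℕ} (hi : i % 2 = 1) :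
    Ment γ i i = (starRingEnd ℂ) (γ i) := by
  rw [Ment, if_neg (by omega), if_pos hi, if_pos rfl]

lemma Ment_od_succ (γ : ℕ → ℂ) {i : ℕ} (hi : i % 2 = 1) :
    Ment γ i (i + 1) = tauc (γ i) := by
  rw [Ment, if_neg (by omega), if_pos hi, if_neg (by omega), if_pos rfl]

lemma Ment_od_zero (γ : ℕ → ℂ) {i j : ℕ} (hi : i % 2 = 1) (h1 : j ≠ i) (h2 : j ≠ i + 1) :
    Ment γ i j = 0 := by
  rw [Ment, if_neg (by omega), if_pos hi, if_neg h1, if_neg h2]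

lemma Ment_ev_pred (γ : ℕ → ℂ) {i : ℕ} (hi : i % 2 = 0) (h0 : i ≠ 0) :
    Ment γ i (i - 1) = tauc (γ (i - 1)) := by
  rw [Ment, if_neg h0, if_neg (by omega), if_pos rfl]

lemma Ment_ev_self (γ : ℕ → ℂ) {i : ℕ} (hi : i % 2 = 0) (h0 : i ≠ 0) :
    Ment γ i i = -γ (i - 1) := by
  rw [Ment, if_neg h0, if_neg (by omega), if_neg (by omega), if_pos rfl]

lemma Ment_ev_zero (γ : ℕ → ℂ) {i j : ℕ} (hi : i % 2 = 0) (h0 : i ≠ 0)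
    (h1 : j ≠ i - 1) (h2 : j ≠ i) : Ment γ i j = 0 := by
  rw [Ment, if_neg h0, if_neg (by omega), if_neg h1, if_neg h2]
-- ===== the L LH = 1 lemma =====

lemma L_row_sum (γ : ℕ → ℂ) (n : ℕ)
    (h1 : ∀ j, j + 2 ≤ n → ‖γ j‖ ≤ 1)
    (h2 : n % 2 = 1 → ‖γ (n - 1)‖ = 1)
    (i j : ℕ) (hi : i < n) (hj : j < n) :
    ∑ k ∈ Finset.range n, Lent γ i k * (starRingEnd ℂ) (Lent γ j k)
      = if i = j then 1 else 0 := by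
  set F : ℕ → ℂ := fun k => Lent γ i k * (starRingEnd ℂ) (Lent γ j k) with hF
  rcases Nat.even_or_odd i with hie | hio
  · have hi2 : i % 2 = 0 := Nat.even_iff.mp hie
    have hsupp : ∀ k, k ≠ i → k ≠ i + 1 → F k = 0 := by
      intro k hk1 hk2
      simp [hF, Lent_ev_zero γ hi2 hk1 hk2]
    rw [sum_range_two_supp F i (i+1) n (by omega) hsupp, if_pos hi]
    rcases Nat.even_or_odd j with hje | hjo
    · have hj2 : j % 2 = 0 := Nat.even_iff.mp hje
      by_cases hij : i = j
      · subst hij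
        rw [if_pos rfl]
        simp only [hF, Lent_ev_self γ hi2, Lent_ev_succ γ hi2, tauc_conj]
        rw [Complex.conj_conj]
        by_cases hsucc : i + 1 < n
        · rw [if_pos hsucc, tauc_mul_self (h1 i (by omega))]
          ring
        · rw [if_neg hsucc]
          have hieq : i = n - 1 := by omega
          have hodd : n % 2 = 1 := by omega
          rw [hieq, conj_mul_self_one (h2 hodd)]
          ring
      · rw [if_neg hij]
        have e1 : Lent γ j i = 0 := Lent_ev_zero γ hj2 (by omega) (by omega)
        have e2 : Lent γ j (i+1) = 0 := Lent_ev_zero γ hj2 (by omega) (by omega)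
        simp [hF, e1, e2]
    · have hj2 : j % 2 = 1 := Nat.odd_iff.mp hjo
      have hij : i ≠ j := by omega
      rw [if_neg hij]
      by_cases hji : j = i + 1
      · subst hji
        have e1 : Lent γ (i+1) i = tauc (γ i) := by
          have := Lent_od_pred γ (i := i+1) (by omega)
          simpa using this
        have e2 : Lent γ (i+1) (i+1) = -γ i := by
          have := Lent_od_self γ (i := i+1) (by omega)
          simpa using this
        simp only [hF, Lent_ev_self γ hi2, Lent_ev_succ γ hi2, e1, e2, tauc_conj]
        rw [if_pos hj]
        simp only [map_neg]
        ring
      · have e1 : Lent γ j i = 0 := Lent_od_zero γ hj2 (by omega) (by omega)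
        have e2 : Lent γ j (i+1) = 0 := Lent_od_zero γ hj2 (by omega) (by omega)
        simp [hF, e1, e2]
  · have hi2 : i % 2 = 1 := Nat.odd_iff.mp hio
    have hsupp : ∀ k, k ≠ i - 1 → k ≠ i → F k = 0 := by
      intro k hk1 hk2
      simp [hF, Lent_od_zero γ hi2 hk1 hk2]
    rw [sum_range_two_supp F (i-1) i n (by omega) hsupp, if_pos (by omega), if_pos hi]
    rcases Nat.even_or_odd j with hje | hjo
    · have hj2 : j % 2 = 0 := Nat.even_iff.mp hje
      have hij : i ≠ j := by omega
      rw [if_neg hij]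
      by_cases hji : j = i - 1
      · subst hji
        have hrw : (i - 1) + 1 = i := by omega
        have e1 : Lent γ (i-1) (i-1) = (starRingEnd ℂ) (γ (i-1)) := Lent_ev_self γ hj2
        have e2 : Lent γ (i-1) i = tauc (γ (i-1)) := by
          have := Lent_ev_succ γ (i := i - 1) hj2
          rwa [hrw] at this
        simp only [hF, Lent_od_pred γ hi2, Lent_od_self γ hi2, e1, e2, tauc_conj,
          Complex.conj_conj]
        ring
      · have e1 : Lent γ j (i-1) = 0 := Lent_ev_zero γ hj2 (by omega) (by omega)
        have e2 : Lent γ j i = 0 := Lent_ev_zero γ hj2 (by omega) (by omega)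
        simp [hF, e1, e2]
    · have hj2 : j % 2 = 1 := Nat.odd_iff.mp hjo
      by_cases hij : i = j
      · subst hij
        rw [if_pos rfl]
        simp only [hF, Lent_od_pred γ hi2, Lent_od_self γ hi2, tauc_conj, map_neg]
        rw [tauc_mul_self (h1 (i-1) (by omega))]
        ring
      · rw [if_neg hij]
        have e1 : Lent γ j (i-1) = 0 := Lent_od_zero γ hj2 (by omega) (by omega)
        have e2 : Lent γ j i = 0 := Lent_od_zero γ hj2 (by omega) (by omega)
        simp [hF, e1, e2]

lemma L_mul_Lh (γ : ℕ → ℂ) (n : ℕ)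
    (h1 : ∀ j, j + 2 ≤ n → ‖γ j‖ ≤ 1)
    (h2 : n % 2 = 1 → ‖γ (n - 1)‖ = 1) :
    (Matrix.of fun i j : Fin n => Lent γ i j) * (Matrix.of fun i j : Fin n => Lent γ i j)ᴴ
      = 1 := by
  ext i j
  rw [Matrix.mul_apply]
  simp only [Matrix.conjTranspose_apply, Matrix.of_apply, RCLike.star_def]
  rw [Fin.sum_univ_eq_sum_range (fun k => Lent γ i k * (starRingEnd ℂ) (Lent γ j k)) n]
  rw [L_row_sum γ n h1 h2 i j i.isLt j.isLt, Matrix.one_apply]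
  simp [Fin.val_inj]

-- ===== the tridiagonal matrix N = z Lᴴ - M =====

noncomputable def Nent (γ : ℕ → ℂ) (z : ℂ) (i j : ℕ) : ℂ :=
  z * (starRingEnd ℂ) (Lent γ j i) - Ment γ i j

lemma Nent_band (γ : ℕ → ℂ) (z : ℂ) :
    ∀ i j, j + 2 ≤ i ∨ i + 2 ≤ j → Nent γ z i j = 0 := by
  intro i j hij
  have hL : Lent γ j i = 0 := by
    rcases Nat.even_or_odd j with hje | hjo
    · exact Lent_ev_zero γ (Nat.even_iff.mp hje) (by omega) (by omega)
    · exact Lent_od_zero γ (Nat.odd_iff.mp hjo) (by omega) (by omega)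
  have hM : Ment γ i j = 0 := by
    rcases Nat.eq_zero_or_pos i with h0 | h0
    · subst h0; exact Ment_zero_row γ (by omega)
    · rcases Nat.even_or_odd i with hie | hio
      · exact Ment_ev_zero γ (Nat.even_iff.mp hie) (by omega) (by omega) (by omega)
      · exact Ment_od_zero γ (Nat.odd_iff.mp hio) (by omega) (by omega)
  rw [Nent, hL, hM]
  simp

lemma Nent_00 (γ : ℕ → ℂ) (z : ℂ) : Nent γ z 0 0 = z * γ 0 - 1 := by
  rw [Nent, Lent_ev_self γ (by norm_num), Ment_zero_zero, Complex.conj_conj]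

lemma Nent_od_diag (γ : ℕ → ℂ) (z : ℂ) {i : ℕ} (hi : i % 2 = 1) :
    Nent γ z i i = -(z * (starRingEnd ℂ) (γ (i-1))) - (starRingEnd ℂ) (γ i) := by
  rw [Nent, Lent_od_self γ hi, Ment_od_self γ hi, map_neg]
  ring

lemma Nent_ev_diag (γ : ℕ → ℂ) (z : ℂ) {i : ℕ} (hi : i % 2 = 0) (h0 : i ≠ 0) :
    Nent γ z i i = z * γ i + γ (i-1) := by
  rw [Nent, Lent_ev_self γ hi, Ment_ev_self γ hi h0, Complex.conj_conj]
  ring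

lemma Nent_ev_sup (γ : ℕ → ℂ) (z : ℂ) {i : ℕ} (hi : i % 2 = 0) :
    Nent γ z i (i+1) = z * tauc (γ i) := by
  have hL : Lent γ (i+1) i = tauc (γ i) := by
    have := Lent_od_pred γ (i := i+1) (by omega)
    simpa using this
  have hM : Ment γ i (i+1) = 0 := by
    rcases Nat.eq_zero_or_pos i with h0 | h0
    · subst h0; exact Ment_zero_row γ (by omega)
    · exact Ment_ev_zero γ hi (by omega) (by omega) (by omega)
  rw [Nent, hL, hM, tauc_conj]
  ring

lemma Nent_ev_sub (γ : ℕ → ℂ) (z : ℂ) {i : ℕ} (hi : i % 2 = 0) :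
    Nent γ z (i+1) i = z * tauc (γ i) := by
  have hL : Lent γ i (i+1) = tauc (γ i) := Lent_ev_succ γ hi
  have hM : Ment γ (i+1) i = 0 := Ment_od_zero γ (by omega) (by omega) (by omega)
  rw [Nent, hL, hM, tauc_conj]
  ring

lemma Nent_od_sup (γ : ℕ → ℂ) (z : ℂ) {i : ℕ} (hi : i % 2 = 1) :
    Nent γ z i (i+1) = -tauc (γ i) := by
  have hL : Lent γ (i+1) i = 0 := Lent_ev_zero γ (by omega) (by omega) (by omega)
  have hM : Ment γ i (i+1) = tauc (γ i) := Ment_od_succ γ hi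
  rw [Nent, hL, hM]
  simp

lemma Nent_od_sub (γ : ℕ → ℂ) (z : ℂ) {i : ℕ} (hi : i % 2 = 1) :
    Nent γ z (i+1) i = -tauc (γ i) := by
  have hL : Lent γ i (i+1) = 0 := Lent_od_zero γ hi (by omega) (by omega)
  have hM : Ment γ (i+1) i = tauc (γ i) := by
    have := Ment_ev_pred γ (i := i+1) (by omega) (by omega)
    simpa using this
  rw [Nent, hL, hM]
  simp
-- ===== generic tridiagonal determinant recursion =====

lemma succAbove_val (m : ℕ) (c : Fin (m + 2)) (k : Fin (m + 1)) :
    ((c.succAbove k : Fin (m + 2)) : ℕ) = if (k : ℕ) < (c : ℕ) then (k : ℕ) else (k : ℕ) + 1 := by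
  rw [Fin.succAbove]
  split_ifs with h1 h2 h3
  · simp
  · exact absurd (by simpa [Fin.lt_def] using h1) h2
  · exact absurd (by simpa [Fin.lt_def] using h3) h1
  · simp

lemma det_tridiag (f : ℕ → ℕ → ℂ) (hf : ∀ i j, j + 2 ≤ i ∨ i + 2 ≤ j → f i j = 0) (m : ℕ) :
    Matrix.det (Matrix.of fun i j : Fin (m + 2) => f i j) =
      f (m+1) (m+1) * Matrix.det (Matrix.of fun i j : Fin (m + 1) => f i j)
        - f (m+1) m * (f m (m+1) * Matrix.det (Matrix.of fun i j : Fin m => f i j)) := by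
  have hrow := Matrix.det_succ_row (Matrix.of fun i j : Fin (m + 2) => f i j) (Fin.last (m+1))
  rw [hrow, Fin.sum_univ_castSucc, Fin.sum_univ_castSucc]
  have h0 : ∀ j : Fin m, ((-1:ℂ)) ^ ((Fin.last (m+1) : ℕ) + ((j.castSucc.castSucc : Fin (m+2)) : ℕ))
      * (Matrix.of fun i j : Fin (m + 2) => f i j) (Fin.last (m+1)) j.castSucc.castSucc
      * Matrix.det (((Matrix.of fun i j : Fin (m + 2) => f i j)).submatrix
          (Fin.last (m+1)).succAbove (j.castSucc.castSucc).succAbove) = 0 := by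
    intro j
    have : f (m+1) ((j : ℕ)) = 0 := hf _ _ (Or.inl (by omega))
    simp only [Matrix.of_apply, Fin.coe_castSucc, Fin.val_last]
    rw [this]; ring
  rw [Finset.sum_eq_zero (fun j _ => h0 j), zero_add]
  have hlast : (Fin.last (m+1)).succAbove = Fin.castSucc := Fin.succAbove_last
  have hA1 : ((Matrix.of fun i j : Fin (m + 2) => f i j).submatrix
      (Fin.last (m+1)).succAbove (Fin.last (m+1)).succAbove)
      = (Matrix.of fun i j : Fin (m + 1) => f i j) := by
    ext i j; simp [hlast]
  set c : Fin (m+2) := (Fin.last m).castSucc with hc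
  have hcval : (c : ℕ) = m := by simp [hc]
  set B := (Matrix.of fun i j : Fin (m + 2) => f i j).submatrix
      (Fin.last (m+1)).succAbove c.succAbove with hB
  have hBd : Matrix.det B = f m (m+1) * Matrix.det (Matrix.of fun i j : Fin m => f i j) := by
    have hcol := Matrix.det_succ_column B (Fin.last m)
    rw [hcol, Fin.sum_univ_castSucc]
    have hB0 : ∀ i : Fin m, ((-1:ℂ)) ^ (((i.castSucc : Fin (m+1)) : ℕ) + ((Fin.last m : Fin (m+1)) : ℕ))
        * B i.castSucc (Fin.last m) * Matrix.det (B.submatrix (i.castSucc).succAbove (Fin.last m).succAbove) = 0 := by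
      intro i
      have hBv : B i.castSucc (Fin.last m) = f (i : ℕ) ((c.succAbove (Fin.last m) : Fin (m+2)) : ℕ) := by
        simp [hB, hlast]
      have hv : ((c.succAbove (Fin.last m) : Fin (m+2)) : ℕ) = m + 1 := by
        rw [succAbove_val]; simp [hcval]
      rw [hBv, hv, hf _ _ (Or.inr (by omega))]; ring
    rw [Finset.sum_eq_zero (fun i _ => hB0 i), zero_add]
    have hBlast : B (Fin.last m) (Fin.last m) = f m (m+1) := by
      have hv : ((c.succAbove (Fin.last m) : Fin (m+2)) : ℕ) = m + 1 := by
        rw [succAbove_val]; simp [hcval]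
      simp [hB, hlast, hv]
    have hsub : B.submatrix (Fin.last m).succAbove (Fin.last m).succAbove
        = (Matrix.of fun i j : Fin m => f i j) := by
      ext i j
      have : ((c.succAbove j.castSucc : Fin (m+2)) : ℕ) = (j : ℕ) := by
        rw [succAbove_val]; simp [hcval]
      simp [hB, Fin.succAbove_last, this]
    rw [hBlast, hsub]
    have : ((-1:ℂ)) ^ (((Fin.last m : Fin (m+1)) : ℕ) + ((Fin.last m : Fin (m+1)) : ℕ)) = 1 := by
      simp [← two_mul, pow_mul]
    rw [this]; ring
  rw [hA1]
  simp only [Matrix.of_apply, Fin.val_last, Fin.coe_castSucc, hBd]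
  have e1 : ((-1:ℂ)) ^ ((m+1) + (m+1)) = 1 := by
    have : (m+1) + (m+1) = 2 * (m+1) := by ring
    simp [this, pow_mul]
  have e2 : ((-1:ℂ)) ^ ((m+1) + m) = -1 := by
    have : (m+1) + m = 2 * m + 1 := by ring
    simp [this, pow_add, pow_mul]
  rw [hcval, e2]
  have e3 : ((-1:ℂ)) ^ (m * 2) = 1 := by rw [mul_comm, pow_mul]; norm_num
  ring_nf
  rw [e3]
  ring

-- ===== determinant of the truncated L =====

lemma Lent_band (γ : ℕ → ℂ) : ∀ i j, j + 2 ≤ i ∨ i + 2 ≤ j → Lent γ i j = 0 := by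
  intro i j hij
  rcases Nat.even_or_odd i with hie | hio
  · exact Lent_ev_zero γ (Nat.even_iff.mp hie) (by omega) (by omega)
  · exact Lent_od_zero γ (Nat.odd_iff.mp hio) (by omega) (by omega)

lemma detL (γ : ℕ → ℂ) : ∀ n, (∀ j, j + 2 ≤ n → ‖γ j‖ ≤ 1) →
    Matrix.det (Matrix.of fun i j : Fin n => Lent γ i j)
      = if n % 2 = 0 then (-1 : ℂ)^(n/2)
        else (-1 : ℂ)^(n/2) * (starRingEnd ℂ) (γ (n-1)) := by
  intro n
  induction n using Nat.strong_induction_on with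
  | _ n ih =>
    match n with
    | 0 => intro _; simp
    | 1 =>
      intro _
      rw [Matrix.det_fin_one]
      simp only [Matrix.of_apply]
      rw [show ((0 : Fin 1) : ℕ) = 0 from rfl, Lent_ev_self γ (by norm_num)]
      norm_num
    | (m+2) =>
      intro hb
      have hb1 : ∀ j, j + 2 ≤ m + 1 → ‖γ j‖ ≤ 1 := fun j hj => hb j (by omega)
      have hb0 : ∀ j, j + 2 ≤ m → ‖γ j‖ ≤ 1 := fun j hj => hb j (by omega)
      rw [det_tridiag (Lent γ) (Lent_band γ) m, ih (m+1) (by omega) hb1, ih m (by omega) hb0]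
      rcases Nat.even_or_odd m with ⟨p, hp⟩ | ⟨p, hp⟩
      · subst hp
        have hm1 : (p + p + 1) % 2 = 1 := by omega
        have hm0 : (p + p) % 2 = 0 := by omega
        have hm2 : (p + p + 2) % 2 = 0 := by omega
        rw [if_neg (by omega), if_pos hm0, if_pos hm2]
        have hd1 : (p + p + 1) / 2 = p := by omega
        have hd0 : (p + p) / 2 = p := by omega
        have hd2 : (p + p + 2) / 2 = p + 1 := by omega
        rw [hd1, hd0, hd2]
        have hLd : Lent γ (p+p+1) (p+p+1) = -γ (p+p) := by
          have := Lent_od_self γ (i := p+p+1) (by omega)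
          simpa using this
        have hLs : Lent γ (p+p+1) (p+p) = tauc (γ (p+p)) := by
          have := Lent_od_pred γ (i := p+p+1) (by omega)
          simpa using this
        have hLu : Lent γ (p+p) (p+p+1) = tauc (γ (p+p)) := Lent_ev_succ γ (by omega)
        rw [hLd, hLs, hLu, show (p+p+1) - 1 = p + p from by omega]
        have hτ := tauc_mul_self (hb (p+p) (by omega))
        rw [show tauc (γ (p+p)) * (tauc (γ (p+p)) * (-1:ℂ)^p)
            = (tauc (γ (p+p)) * tauc (γ (p+p))) * (-1:ℂ)^p from by ring, hτ, pow_succ]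
        ring
      · subst hp
        have hm2 : (2*p+1+2) % 2 = 1 := by omega
        have hm1 : (2*p+1+1) % 2 = 0 := by omega
        rw [if_pos hm1, if_neg (by omega : ¬ (2*p+1) % 2 = 0),
          if_neg (by omega : ¬ (2*p+1+2) % 2 = 0)]
        have hd2 : (2*p+1+2) / 2 = p + 1 := by omega
        have hd1 : (2*p+1+1) / 2 = p + 1 := by omega
        rw [hd2, hd1]
        have hLd : Lent γ (2*p+1+1) (2*p+1+1) = (starRingEnd ℂ) (γ (2*p+1+1)) :=
          Lent_ev_self γ (by omega)
        have hLs : Lent γ (2*p+1+1) (2*p+1) = 0 :=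
          Lent_ev_zero γ (by omega) (by omega) (by omega)
        rw [hLd, hLs, show (2*p+1+2) - 1 = 2*p+1+1 from by omega]
        ring

-- ===== determinant of the truncated N, via the Szegő recursion =====

lemma detN (γ : ℕ → ℂ) (z : ℂ) : ∀ n, (∀ j, j + 2 ≤ n → ‖γ j‖ ≤ 1) →
    Matrix.det (Matrix.of fun i j : Fin n => Nent γ z i j)
      = (-1:ℂ)^((n+1)/2) *
          (Polynomial.eval z (if n % 2 = 0 then szego γ n else phist γ n)) := by
  intro n
  induction n using Nat.strong_induction_on with
  | _ n ih =>
    match n with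
    | 0 => intro _; simp [szego_zero]
    | 1 =>
      intro _
      rw [Matrix.det_fin_one]
      simp only [Matrix.of_apply]
      rw [show ((0 : Fin 1) : ℕ) = 0 from rfl, Nent_00]
      rw [if_neg (by omega), show (1+1)/2 = 1 from by omega]
      rw [show (1:ℕ) = 0 + 1 from rfl, eval_phist_succ, phist_zero, szego_zero]
      simp
      ring
    | (m+2) =>
      intro hb
      have hb1 : ∀ j, j + 2 ≤ m + 1 → ‖γ j‖ ≤ 1 := fun j hj => hb j (by omega)
      have hb0 : ∀ j, j + 2 ≤ m → ‖γ j‖ ≤ 1 := fun j hj => hb j (by omega)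
      rw [det_tridiag (Nent γ z) (Nent_band γ z) m, ih (m+1) (by omega) hb1, ih m (by omega) hb0]
      have hτ := tauc_mul_self (hb m (by omega))
      rcases Nat.even_or_odd m with ⟨p, hp⟩ | ⟨p, hp⟩
      · -- m = p + p even : result is (-1)^(p+1) Φ_{m+2}
        subst hp
        rw [if_pos (by omega : (p+p) % 2 = 0), if_neg (by omega : ¬ (p+p+1) % 2 = 0),
          if_pos (by omega : (p+p+2) % 2 = 0)]
        rw [show (p+p+1)/2 = p from by omega, show (p+p+1+1)/2 = p+1 from by omega,
          show (p+p+2+1)/2 = p+1 from by omega]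
        have hNd : Nent γ z (p+p+1) (p+p+1)
            = -(z * (starRingEnd ℂ) (γ (p+p))) - (starRingEnd ℂ) (γ (p+p+1)) := by
          have := Nent_od_diag γ z (i := p+p+1) (by omega)
          simpa using this
        have hNs : Nent γ z (p+p+1) (p+p) = z * tauc (γ (p+p)) := Nent_ev_sub γ z (by omega)
        have hNu : Nent γ z (p+p) (p+p+1) = z * tauc (γ (p+p)) := Nent_ev_sup γ z (by omega)
        rw [hNd, hNs, hNu]
        rw [show (p+p+2) = (p+p+1)+1 from rfl, eval_szego_succ γ (p+p+1) z,
          eval_szego_succ γ (p+p) z, eval_phist_succ γ (p+p) z]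
        rw [pow_succ]
        linear_combination (-(z*z*((-1:ℂ)^p)*(Polynomial.eval z (szego γ (p+p))))) * hτ
      · -- m = 2p+1 odd : result is (-1)^(p+2) Φ*_{m+2}
        subst hp
        rw [if_neg (by omega : ¬ (2*p+1) % 2 = 0), if_pos (by omega : (2*p+1+1) % 2 = 0),
          if_neg (by omega : ¬ (2*p+1+2) % 2 = 0)]
        rw [show (2*p+1+1)/2 = p+1 from by omega, show (2*p+1+1+1)/2 = p+1 from by omega,
          show (2*p+1+2+1)/2 = p+2 from by omega]
        have hNd : Nent γ z (2*p+1+1) (2*p+1+1) = z * γ (2*p+1+1) + γ (2*p+1) := by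
          have := Nent_ev_diag γ z (i := 2*p+1+1) (by omega) (by omega)
          simpa using this
        have hNs : Nent γ z (2*p+1+1) (2*p+1) = -tauc (γ (2*p+1)) := Nent_od_sub γ z (by omega)
        have hNu : Nent γ z (2*p+1) (2*p+1+1) = -tauc (γ (2*p+1)) := Nent_od_sup γ z (by omega)
        rw [hNd, hNs, hNu]
        rw [show (2*p+1+2) = (2*p+1+1)+1 from rfl, eval_phist_succ γ (2*p+1+1) z,
          eval_phist_succ γ (2*p+1) z, eval_szego_succ γ (2*p+1) z]
        rw [show ((p:ℕ)+2) = (p+1)+1 from rfl, pow_succ]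
        linear_combination (-((-1:ℂ)^(p+1) * (Polynomial.eval z (phist γ (2*p+1))))) * hτ
-- ===== characteristic polynomial evaluation and spectrum =====

lemma evalCharpoly {n : ℕ} (A : Matrix (Fin n) (Fin n) ℂ) (z : ℂ) :
    Polynomial.eval z A.charpoly
      = Matrix.det (z • (1 : Matrix (Fin n) (Fin n) ℂ) - A) := by
  rw [Matrix.charpoly, eval_det, Matrix.matPolyEquiv_charmatrix]
  rw [Polynomial.eval_sub, Polynomial.eval_X, Polynomial.eval_C]
  congr 1
  rw [smul_one_eq_diagonal]
  rfl

lemma mem_spectrum_iff_root {n : ℕ} (A : Matrix (Fin n) (Fin n) ℂ) (z : ℂ) :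
    z ∈ spectrum ℂ A ↔ A.charpoly.IsRoot z := by
  rw [spectrum.mem_iff, Polynomial.IsRoot, evalCharpoly,
    Algebra.algebraMap_eq_smul_one, Matrix.isUnit_iff_isUnit_det]
  simp [isUnit_iff_ne_zero]

-- ===== the main evaluation identity =====

lemma main_eval (n : ℕ) (hn : 1 ≤ n) (α : ℕ → ℂ)
    (hα : ∀ k < n - 1, ‖α k‖ < 1)
    (β : ℂ) (hβ : ‖β‖ = 1) (z : ℂ) :
    Polynomial.eval z (popuc α β (n-1))
      = Polynomial.eval z
          (Matrix.charpoly (CMVfin (fun k => if k = n - 1 then β else α k) n)) := by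
  set γ : ℕ → ℂ := fun k => if k = n - 1 then β else α k with hγ
  have hγle : ∀ j, j + 2 ≤ n → ‖γ j‖ ≤ 1 := by
    intro j hj
    have : γ j = α j := if_neg (by omega)
    rw [this]
    exact le_of_lt (hα j (by omega))
  have hγn : γ (n-1) = β := if_pos rfl
  have hγa : n % 2 = 1 → ‖γ (n-1)‖ = 1 := fun _ => by rw [hγn]; exact hβ
  rw [evalCharpoly]
  have hN : (Matrix.of fun i j : Fin n => Nent γ z i j)
      = z • (Matrix.of fun i j : Fin n => Lent γ i j)ᴴ
        - (Matrix.of fun i j : Fin n => Ment γ i j) := by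
    ext i j
    simp only [Matrix.sub_apply, Matrix.smul_apply, Matrix.conjTranspose_apply,
      Matrix.of_apply, RCLike.star_def, smul_eq_mul]
    rw [Nent]
  have hfac : z • (1 : Matrix (Fin n) (Fin n) ℂ) - CMVfin γ n
      = (Matrix.of fun i j : Fin n => Lent γ i j)
          * (Matrix.of fun i j : Fin n => Nent γ z i j) := by
    rw [hN, Matrix.mul_sub, mul_smul_comm, L_mul_Lh γ n hγle hγa, CMVfin]
  rw [hfac, Matrix.det_mul, detL γ n hγle, detN γ z n hγle]
  have hsz : szego γ (n-1) = szego α (n-1) :=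
    szego_congr _ (fun j hj => if_neg (by omega))
  have hph : phist γ (n-1) = phist α (n-1) :=
    phist_congr _ (fun j hj => if_neg (by omega))
  have hpop : popuc α β (n-1)
      = X * szego α (n-1) - Polynomial.C ((starRingEnd ℂ) β) * phist α (n-1) := rfl
  rw [hpop]
  rw [Polynomial.eval_sub, Polynomial.eval_mul, Polynomial.eval_mul, Polynomial.eval_X,
    Polynomial.eval_C]
  rcases Nat.even_or_odd n with ⟨p, hp⟩ | ⟨p, hp⟩
  · -- n even
    have hne : n % 2 = 0 := by omega
    rw [if_pos hne, if_pos hne]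
    have he : Polynomial.eval z (szego γ n)
        = z * Polynomial.eval z (szego γ (n-1))
          - (starRingEnd ℂ) (γ (n-1)) * Polynomial.eval z (phist γ (n-1)) := by
      conv_lhs => rw [show n = (n-1)+1 from by omega]
      rw [eval_szego_succ]
    rw [he, hγn, hsz, hph]
    rw [show (n+1)/2 = p from by omega, show n/2 = p from by omega]
    have hpw : ((-1:ℂ)^p) * ((-1:ℂ)^p) = 1 := by
      rw [← pow_add, ← two_mul, pow_mul]; norm_num
    linear_combination ((starRingEnd ℂ) β * Polynomial.eval z (phist α (n-1))
      - z * Polynomial.eval z (szego α (n-1))) * hpw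
  · -- n odd
    have hno : ¬ n % 2 = 0 := by omega
    rw [if_neg hno, if_neg hno]
    have he : Polynomial.eval z (phist γ n)
        = Polynomial.eval z (phist γ (n-1))
          - γ (n-1) * (z * Polynomial.eval z (szego γ (n-1))) := by
      conv_lhs => rw [show n = (n-1)+1 from by omega]
      rw [eval_phist_succ]
    rw [he, hγn, hsz, hph]
    rw [show (n+1)/2 = p + 1 from by omega, show n/2 = p from by omega]
    have hpw : ((-1:ℂ)^p) * ((-1:ℂ)^p) = 1 := by
      rw [← pow_add, ← two_mul, pow_mul]; norm_num
    have hββ : (starRingEnd ℂ) β * β = 1 := conj_mul_self_one hβ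
    rw [pow_succ]
    linear_combination
      ((starRingEnd ℂ) β * Polynomial.eval z (phist α (n-1))
        - (starRingEnd ℂ) β * β * z * Polynomial.eval z (szego α (n-1))) * hpw
      + (-(z * Polynomial.eval z (szego α (n-1)))) * hββ

/-- **Proposition 3.2**. With `α_0, …, α_{n-2} ∈ 𝔻` and `β ∈ ∂𝔻`, the paraorthogonal
polynomial `Φ_n(z;β)` equals the characteristic polynomial of the finite CMV matrix
`C_n(α_0, …, α_{n-2}, β)`; in particular, its zeros are exactly the eigenvalues. -/
theorem popuc_eq_charpoly_cmvFin
    (n : ℕ) (hn : 1 ≤ n) (α : ℕ → ℂ)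
    (hα : ∀ k < n - 1, ‖α k‖ < 1)
    (β : ℂ) (hβ : ‖β‖ = 1) :
    popuc α β (n - 1) =
        (CMVfin (fun k => if k = n - 1 then β else α k) n).charpoly ∧
      ∀ z : ℂ, (popuc α β (n - 1)).IsRoot z ↔
        z ∈ spectrum ℂ (CMVfin (fun k => if k = n - 1 then β else α k) n) := by
  constructor
  · exact Polynomial.funext (fun z => main_eval n hn α hα β hβ z)
  · intro z
    rw [show popuc α β (n - 1)
        = (CMVfin (fun k => if k = n - 1 then β else α k) n).charpoly from
        Polynomial.funext (fun z => main_eval n hn α hα β hβ z)]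
    exact (mem_spectrum_iff_root _ z).symm
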